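/- Let 𝒜 ⊂ ℕ be a finite set of positive integers and let Q, Q' be points of 𝕋² = ℝ²/ℤ² with rational coordinates. For every ε > 0 there exists l* > 0 such that every line segment L ⊂ 𝕋² with midpoint Q, irrational slope [a_1, a_2, …] with all a_i ∈ 𝒜, and length greater than l*, satisfies dist(L, Q') < ε. -/

import Mathlib

/-- The value of the finite continued fraction `[a₁,…,aₙ]`. -/
noncomputable def cfFin : List ℕ → ℝ
  | [] => 0
  | a :: l => 1 / ((a : ℝ) + cfFin l)

/-- `α = [a₁, a₂, …]`: the finite truncations of the continued fraction with partial
quotients `a 0 = a₁, a 1 = a₂, …` converge to `α`. -/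
def cfLim (a : ℕ → ℕ) (α : ℝ) : Prop :=
  Filter.Tendsto (fun n => cfFin (List.ofFn fun i : Fin n => a i)) Filter.atTop (nhds α)

/-- CF value with seed `t` in place of the tail. -/
noncomputable def cfVal : List ℕ → ℝ → ℝ
  | [], t => t
  | a :: l, t => 1 / ((a : ℝ) + cfVal l t)

@[simp] lemma cfVal_nil (t : ℝ) : cfVal [] t = t := rfl
@[simp] lemma cfVal_cons (a : ℕ) (l : List ℕ) (t : ℝ) :
    cfVal (a :: l) t = 1 / ((a : ℝ) + cfVal l t) := rfl

lemma cfFin_eq_cfVal (l : List ℕ) : cfFin l = cfVal l 0 := by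
  induction l with
  | nil => rfl
  | cons a l ih => simp [cfFin, ih]

lemma cfVal_append (l₁ l₂ : List ℕ) (t : ℝ) :
    cfVal (l₁ ++ l₂) t = cfVal l₁ (cfVal l₂ t) := by
  induction l₁ with
  | nil => rfl
  | cons a l ih => simp [ih]

lemma cfVal_nonneg {l : List ℕ} {t : ℝ} (ht : 0 ≤ t) : 0 ≤ cfVal l t := by
  induction l with
  | nil => simpa
  | cons a l ih =>
    rw [cfVal_cons]
    have : (0:ℝ) ≤ (a:ℝ) + cfVal l t := by positivity
    positivity

lemma cfVal_le_one {l : List ℕ} (hl : ∀ x ∈ l, 1 ≤ x) {t : ℝ} (ht : 0 ≤ t) (ht1 : t ≤ 1) :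
    cfVal l t ≤ 1 := by
  induction l with
  | nil => simpa
  | cons a l ih =>
    have ha : (1 : ℝ) ≤ (a : ℝ) := by exact_mod_cast hl a (by simp)
    have h0 : 0 ≤ cfVal l t := cfVal_nonneg ht
    rw [cfVal_cons, div_le_one (by linarith)]
    linarith

/-- `(pA, pB, qA, qB)` so that `cfVal l t = (pA t + pB)/(qA t + qB)`. -/
def cm : List ℕ → ℕ × ℕ × ℕ × ℕ
  | [] => (1, 0, 0, 1)
  | a :: l =>
    ((cm l).2.2.1, (cm l).2.2.2, a * (cm l).2.2.1 + (cm l).1, a * (cm l).2.2.2 + (cm l).2.1)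

@[simp] lemma cm_nil : cm [] = (1, 0, 0, 1) := rfl
@[simp] lemma cm_cons (a : ℕ) (l : List ℕ) :
    cm (a :: l) = ((cm l).2.2.1, (cm l).2.2.2,
      a * (cm l).2.2.1 + (cm l).1, a * (cm l).2.2.2 + (cm l).2.1) := rfl

lemma qB_pos {l : List ℕ} (hl : ∀ x ∈ l, 1 ≤ x) : 1 ≤ (cm l).2.2.2 := by
  induction l with
  | nil => simp
  | cons a l ih =>
    have ha : 1 ≤ a := hl a (by simp)
    have ih' := ih (fun x hx => hl x (by simp [hx]))
    simp only [cm_cons]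
    calc 1 = 1 * 1 := by ring
    _ ≤ a * (cm l).2.2.2 := Nat.mul_le_mul ha ih'
    _ ≤ _ := Nat.le_add_right _ _

lemma cm_det (l : List ℕ) :
    ((cm l).1 : ℤ) * (cm l).2.2.2 - (cm l).2.1 * (cm l).2.2.1 = (-1) ^ l.length := by
  induction l with
  | nil => simp
  | cons a l ih =>
    simp only [cm_cons, List.length_cons, pow_succ]
    push_cast
    linear_combination -ih

lemma cfVal_formula {l : List ℕ} (hl : ∀ x ∈ l, 1 ≤ x) {t : ℝ} (ht : 0 ≤ t) :
    cfVal l t = (((cm l).1 : ℝ) * t + (cm l).2.1) / (((cm l).2.2.1 : ℝ) * t + (cm l).2.2.2) := by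
  induction l with
  | nil => simp
  | cons a l ih =>
    have ha : (1 : ℝ) ≤ (a : ℝ) := by exact_mod_cast hl a (by simp)
    have hden : (0:ℝ) < ((cm l).2.2.1 : ℝ) * t + (cm l).2.2.2 := by
      have h1 : (1:ℝ) ≤ ((cm l).2.2.2 : ℝ) := by exact_mod_cast qB_pos (fun x hx => hl x (by simp [hx]))
      have h2 : (0:ℝ) ≤ ((cm l).2.2.1 : ℝ) * t := by positivity
      linarith
    have hv : 0 ≤ cfVal l t := cfVal_nonneg ht
    have hpos : (0:ℝ) < (a : ℝ) + cfVal l t := by linarith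
    rw [cfVal_cons, ih (fun x hx => hl x (by simp [hx]))]
    rw [cm_cons]
    push_cast
    rw [div_eq_div_iff (by positivity)]
    · field_simp
      ring
    · have : (0:ℝ) ≤ ((cm l).1 : ℝ) * t + ((cm l).2.1 : ℝ) := by positivity
      nlinarith

-- p2 pieces (to be appended)
lemma mem_uIcc_of_mul {x a b : ℝ} (h : 0 ≤ (x - a) * (b - x)) : x ∈ Set.uIcc a b := by
  rw [Set.mem_uIcc]
  rcases le_or_gt a x with h1 | h1 <;> rcases le_or_gt x b with h2 | h2
  · exact Or.inl ⟨h1, h2⟩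
  · exact Or.inr ⟨h2.le, by nlinarith⟩
  · exact Or.inr ⟨by nlinarith, h1.le⟩
  · exact Or.inr ⟨h2.le, h1.le⟩

lemma cfVal_mem_uIcc {l : List ℕ} (hl : ∀ x ∈ l, 1 ≤ x) {t : ℝ} (ht : 0 ≤ t) (ht1 : t ≤ 1) :
    cfVal l t ∈ Set.uIcc (cfVal l 0) (cfVal l 1) := by
  have hqa : (0:ℝ) ≤ ((cm l).2.2.1 : ℝ) := by positivity
  have hqb : (1:ℝ) ≤ ((cm l).2.2.2 : ℝ) := by exact_mod_cast qB_pos hl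
  set pa := ((cm l).1 : ℝ)
  set pb := ((cm l).2.1 : ℝ)
  set qa := ((cm l).2.2.1 : ℝ)
  set qb := ((cm l).2.2.2 : ℝ)
  have hden : ∀ s : ℝ, 0 ≤ s → 0 < qa * s + qb := fun s hs => by nlinarith
  have e0 := cfVal_formula hl (le_refl (0:ℝ))
  have e1 := cfVal_formula hl (zero_le_one (α := ℝ))
  have et := cfVal_formula hl ht
  apply mem_uIcc_of_mul
  rw [e0, e1, et]
  have h0 := hden 0 le_rfl
  have h1 := hden 1 zero_le_one
  have htd := hden t ht
  have key : (pa * t + pb) / (qa * t + qb) - (pa * 0 + pb) / (qa * 0 + qb)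
      = t * (pa * qb - pb * qa) / ((qa * t + qb) * (qa * 0 + qb)) := by
    field_simp
    ring
  have key2 : (pa * 1 + pb) / (qa * 1 + qb) - (pa * t + pb) / (qa * t + qb)
      = (1 - t) * (pa * qb - pb * qa) / ((qa * 1 + qb) * (qa * t + qb)) := by
    field_simp
    ring
  rw [key, key2]
  have : 0 ≤ t * (1 - t) * (pa * qb - pb * qa) ^ 2 :=
    mul_nonneg (mul_nonneg ht (by linarith)) (sq_nonneg _)
  rw [div_mul_div_comm]
  apply div_nonneg
  · nlinarith
  · positivity

lemma qB_ge_len {l : List ℕ} (hl : ∀ x ∈ l, 1 ≤ x) :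
    l.length ≤ (cm l).2.2.2 ∧ l.length + 1 ≤ (cm l).2.1 + (cm l).2.2.2 := by
  induction l with
  | nil => simp
  | cons a l ih =>
    have ha : 1 ≤ a := hl a (by simp)
    obtain ⟨ih1, ih2⟩ := ih (fun x hx => hl x (by simp [hx]))
    have hq : 1 ≤ (cm l).2.2.2 := qB_pos (fun x hx => hl x (by simp [hx]))
    constructor
    · simp only [cm_cons, List.length_cons]
      calc l.length + 1 ≤ (cm l).2.2.2 + (cm l).2.1 := by omega
      _ ≤ a * (cm l).2.2.2 + (cm l).2.1 := by nlinarith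
    · simp only [cm_cons, List.length_cons]
      have : 1 * (cm l).2.2.2 ≤ a * (cm l).2.2.2 := Nat.mul_le_mul_right _ ha
      omega

lemma qA_pos {l : List ℕ} (hne : l ≠ []) (hl : ∀ x ∈ l, 1 ≤ x) : 1 ≤ (cm l).2.2.1 := by
  induction l with
  | nil => simp at hne
  | cons a l ih =>
    have ha : 1 ≤ a := hl a (by simp)
    rcases l with _ | ⟨b, l'⟩
    · simp [cm]
    · have ih' := ih (by simp) (fun x hx => hl x (by simp [hx]))
      show 1 ≤ a * (cm (b :: l')).2.2.1 + (cm (b :: l')).1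
      have h2 : 1 * 1 ≤ a * (cm (b :: l')).2.2.1 := Nat.mul_le_mul ha ih'
      omega

/-- The "Cantor set" of level-`n` continued fraction intervals with digits in `𝒜`. -/
def Cset (𝒜 : Finset ℕ) : Set ℝ :=
  {α | ∀ n : ℕ, ∃ l : List ℕ, l.length = n ∧ (∀ x ∈ l, x ∈ 𝒜) ∧
    α ∈ Set.uIcc (cfVal l 0) (cfVal l 1)}

lemma isClosed_uIcc' {a b : ℝ} : IsClosed (Set.uIcc a b) := by
  rw [Set.uIcc]; exact isClosed_Icc

lemma Cset_subset_Icc (𝒜 : Finset ℕ) : Cset 𝒜 ⊆ Set.Icc (0:ℝ) 1 := by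
  intro α hα
  obtain ⟨l, hlen, _, hmem⟩ := hα 0
  rw [List.length_eq_zero_iff] at hlen
  subst hlen
  simpa [Set.uIcc_of_le] using hmem

lemma finite_lists (𝒜 : Finset ℕ) (n : ℕ) :
    {l : List ℕ | l.length = n ∧ ∀ x ∈ l, x ∈ 𝒜}.Finite := by
  induction n with
  | zero =>
    apply Set.Finite.subset (Set.finite_singleton ([] : List ℕ))
    rintro l ⟨hl, -⟩
    simpa using List.length_eq_zero_iff.mp hl
  | succ n ih =>
    apply Set.Finite.subset (Set.Finite.image2 List.cons 𝒜.finite_toSet ih)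
    rintro l ⟨hl, hmem⟩
    rcases l with _ | ⟨a, l'⟩
    · simp at hl
    · exact Set.mem_image2_of_mem (hmem a (by simp))
        ⟨by simpa using hl, fun x hx => hmem x (by simp [hx])⟩

lemma isCompact_Cset (𝒜 : Finset ℕ) : IsCompact (Cset 𝒜) := by
  apply IsCompact.of_isClosed_subset isCompact_Icc _ (Cset_subset_Icc 𝒜)
  have : Cset 𝒜 = ⋂ n : ℕ, ⋃ l ∈ {l : List ℕ | l.length = n ∧ ∀ x ∈ l, x ∈ 𝒜},
      Set.uIcc (cfVal l 0) (cfVal l 1) := by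
    ext α
    simp only [Cset, Set.mem_setOf_eq, Set.mem_iInter, Set.mem_iUnion]
    constructor
    · intro h n; obtain ⟨l, h1, h2, h3⟩ := h n; exact ⟨l, ⟨h1, h2⟩, h3⟩
    · intro h n; obtain ⟨l, ⟨h1, h2⟩, h3⟩ := h n; exact ⟨l, h1, h2, h3⟩
  rw [this]
  exact isClosed_iInter fun n =>
    Set.Finite.isClosed_biUnion (finite_lists 𝒜 n) fun l _ => isClosed_uIcc'

lemma mem_Cset_of_cfLim {𝒜 : Finset ℕ} (h𝒜 : ∀ x ∈ 𝒜, 1 ≤ x) {a : ℕ → ℕ}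
    (ha : ∀ i, a i ∈ 𝒜) {α : ℝ} (hlim : cfLim a α) : α ∈ Cset 𝒜 := by
  intro n
  refine ⟨List.ofFn (fun i : Fin n => a i), by simp, by
    intro x hx
    simp only [List.mem_ofFn] at hx
    obtain ⟨i, rfl⟩ := hx
    exact ha i, ?_⟩
  set l := List.ofFn (fun i : Fin n => a i) with hl
  have hlmem : ∀ x ∈ l, 1 ≤ x := by
    intro x hx
    simp only [hl, List.mem_ofFn] at hx
    obtain ⟨i, rfl⟩ := hx
    exact h𝒜 _ (ha i)
  have key : ∀ m : ℕ, cfFin (List.ofFn fun i : Fin (n + m) => a i)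
      ∈ Set.uIcc (cfVal l 0) (cfVal l 1) := by
    intro m
    have hsplit : (List.ofFn fun i : Fin (n + m) => a i)
        = l ++ List.ofFn (fun j : Fin m => a (n + j)) := by
      rw [List.ofFn_add]
      congr 1
    set r := List.ofFn (fun j : Fin m => a (n + j)) with hr
    have hrmem : ∀ x ∈ r, 1 ≤ x := by
      intro x hx
      simp only [hr, List.mem_ofFn] at hx
      obtain ⟨i, rfl⟩ := hx
      exact h𝒜 _ (ha _)
    have h0 : (0:ℝ) ≤ cfVal r 0 := cfVal_nonneg le_rfl
    have h1 : cfVal r 0 ≤ 1 := cfVal_le_one hrmem le_rfl zero_le_one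
    rw [hsplit, cfFin_eq_cfVal, cfVal_append]
    exact cfVal_mem_uIcc hlmem h0 h1
  have htend : Filter.Tendsto (fun m : ℕ => cfFin (List.ofFn fun i : Fin (n + m) => a i))
      Filter.atTop (nhds α) :=
    hlim.comp (Filter.tendsto_atTop_atTop.mpr fun b => ⟨b, fun m hm => by omega⟩)
  exact isClosed_uIcc'.mem_of_tendsto htend (Filter.Eventually.of_forall key)

lemma Cset_irrational {𝒜 : Finset ℕ} (h𝒜 : ∀ x ∈ 𝒜, 1 ≤ x) {α : ℝ}
    (hα : α ∈ Cset 𝒜) : Irrational α := by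
  rw [Irrational]
  rintro ⟨r, rfl⟩
  obtain ⟨l, hlen, hmem𝒜, hI⟩ := hα (r.den + 1)
  have hl : ∀ x ∈ l, 1 ≤ x := fun x hx => h𝒜 x (hmem𝒜 x hx)
  have hne : l ≠ [] := by
    intro h; rw [h] at hlen; simp at hlen
  set PA := (cm l).1
  set PB := (cm l).2.1
  set QA := (cm l).2.2.1
  set QB := (cm l).2.2.2
  have hQB : 1 ≤ QB := qB_pos hl
  have hQA : 1 ≤ QA := qA_pos hne hl
  have hlenQB : l.length ≤ QB := (qB_ge_len hl).1
  have hdet : (PA : ℤ) * QB - PB * QA = (-1) ^ l.length := cm_det l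
  -- endpoints
  have e0 : cfVal l 0 = (PB : ℝ) / QB := by
    rw [cfVal_formula hl le_rfl]; simp; rfl
  have e1 : cfVal l 1 = ((PA : ℝ) + PB) / (QA + QB) := by
    rw [cfVal_formula hl zero_le_one]; simp; rfl
  have hQBr : (0:ℝ) < (QB : ℝ) := by exact_mod_cast hQB.trans_lt' Nat.zero_lt_one
  have hQABr : (0:ℝ) < (QA : ℝ) + QB := by positivity
  -- interval length
  have hlength : |cfVal l 1 - cfVal l 0| = 1 / (((QA : ℝ) + QB) * QB) := by
    rw [e0, e1]
    have : ((PA : ℝ) + PB) / (QA + QB) - (PB : ℝ) / QB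
        = (((PA : ℝ) * QB - PB * QA)) / (((QA : ℝ) + QB) * QB) := by
      field_simp; ring
    rw [this, abs_div]
    have hnum : |((PA : ℝ) * QB - PB * QA)| = 1 := by
      have : ((PA : ℝ) * QB - PB * QA) = (((-1 : ℤ) ^ l.length : ℤ) : ℝ) := by
        exact_mod_cast congrArg (fun z : ℤ => (z : ℝ)) hdet
      rw [this]
      simp [abs_pow]
    rw [hnum, abs_of_pos (by positivity)]
  -- both α = r and e0 are in the interval
  have hr_mem : (r : ℝ) ∈ Set.uIcc (cfVal l 0) (cfVal l 1) := hI
  have he0_mem : cfVal l 0 ∈ Set.uIcc (cfVal l 0) (cfVal l 1) := Set.left_mem_uIcc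
  have hdist : |(r : ℝ) - cfVal l 0| ≤ 1 / (((QA : ℝ) + QB) * QB) := by
    rw [← hlength]
    have habs1 : cfVal l 1 - cfVal l 0 ≤ |cfVal l 1 - cfVal l 0| := le_abs_self _
    have habs2 : -|cfVal l 1 - cfVal l 0| ≤ cfVal l 1 - cfVal l 0 := neg_abs_le _
    have habs0 : (0:ℝ) ≤ |cfVal l 1 - cfVal l 0| := abs_nonneg _
    rcases Set.mem_uIcc.mp hI with ⟨h1, h2⟩ | ⟨h1, h2⟩ <;> rw [abs_le] <;>
      constructor <;> linarith
  have hdenpos : (0:ℤ) < (r.den : ℤ) := by exact_mod_cast r.pos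
  by_cases hcase : (r : ℝ) = (PB : ℝ) / QB
  · -- the rational is the left endpoint: its denominator is QB, too big
    have hq : (r : ℚ) * QB = PB := by
      have h1 : ((r * (QB : ℚ) : ℚ) : ℝ) = ((PB : ℚ) : ℝ) := by
        push_cast
        rw [hcase]
        field_simp
      exact_mod_cast h1
    have h2 : (r.num : ℤ) * QB = (PB : ℤ) * r.den := by
      have hd : ((r.den : ℚ)) ≠ 0 := by
        exact_mod_cast r.den_nz
      have hnum : (r.num : ℚ) = r * r.den := (div_eq_iff hd).mp (Rat.num_div_den r)
      have : (r.num : ℚ) * QB = (PB : ℚ) * r.den := by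
        rw [hnum]
        calc (r : ℚ) * r.den * QB = ((r : ℚ) * QB) * r.den := by ring
        _ = (PB : ℚ) * r.den := by rw [hq]
      exact_mod_cast this
    have hdvd : (QB : ℤ) ∣ (PB : ℤ) * r.den := ⟨r.num, by linarith [h2]⟩
    have hcop : IsCoprime (QB : ℤ) (PB : ℤ) := by
      refine ⟨(-1) ^ l.length * PA, -((-1) ^ l.length * QA), ?_⟩
      have hs : ((-1 : ℤ) ^ l.length) * ((-1 : ℤ) ^ l.length) = 1 := by
        rw [← pow_add, ← two_mul, pow_mul]
        norm_num
      linear_combination ((-1 : ℤ) ^ l.length) * hdet + hs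
    have hQBled : (QB : ℤ) ≤ r.den := Int.le_of_dvd hdenpos (hcop.dvd_of_dvd_mul_left hdvd)
    have : (r.den : ℤ) + 1 ≤ QB := by
      have : r.den + 1 ≤ QB := hlen ▸ hlenQB
      exact_mod_cast this
    omega
  · -- the rational differs from the left endpoint: gap at least 1/(den*QB)
    set k : ℤ := r.num * QB - PB * r.den with hk
    have hk0 : k ≠ 0 := by
      intro h0
      apply hcase
      have hRr : (r : ℝ) = (r.num : ℝ) / r.den := by rw [Rat.cast_def]
      have hdr : (0:ℝ) < (r.den : ℝ) := by exact_mod_cast r.pos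
      have hnum : (r.num : ℝ) * QB = (PB : ℝ) * r.den := by
        have : r.num * QB = PB * r.den := by omega
        exact_mod_cast this
      rw [hRr]
      field_simp
      linarith [hnum]
    have hgap : 1 / ((r.den : ℝ) * QB) ≤ |(r : ℝ) - (PB : ℝ) / QB| := by
      have hdr : (0:ℝ) < (r.den : ℝ) := by exact_mod_cast r.pos
      have hRr : (r : ℝ) = (r.num : ℝ) / r.den := by rw [Rat.cast_def]
      have hdiff : (r : ℝ) - (PB : ℝ) / QB = (k : ℝ) / ((r.den : ℝ) * QB) := by
        rw [hRr, hk]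
        push_cast
        field_simp
      rw [hdiff, abs_div, abs_of_pos (show (0:ℝ) < (r.den : ℝ) * QB by positivity)]
      have h1k : (1:ℝ) ≤ |(k : ℝ)| := by
        have := Int.one_le_abs hk0
        calc (1:ℝ) = ((1:ℤ):ℝ) := by norm_num
        _ ≤ ((|k| : ℤ) : ℝ) := by exact_mod_cast this
        _ = |(k : ℝ)| := by push_cast; ring
      gcongr
    -- now compare the two bounds
    rw [e0] at hdist
    have hcomb : 1 / ((r.den : ℝ) * QB) ≤ 1 / (((QA : ℝ) + QB) * QB) := le_trans hgap hdist
    have hdr : (0:ℝ) < (r.den : ℝ) := by exact_mod_cast r.pos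
    have hle : ((QA : ℝ) + QB) * QB ≤ (r.den : ℝ) * QB := by
      have h1 : (0:ℝ) < ((QA : ℝ) + QB) * QB := by positivity
      have h2 : (0:ℝ) < (r.den : ℝ) * QB := by positivity
      rw [div_le_div_iff₀ h2 h1] at hcomb
      nlinarith
    have hle2 : (QA : ℝ) + QB ≤ (r.den : ℝ) :=
      le_of_mul_le_mul_right hle hQBr
    have hge : (r.den : ℝ) + 2 ≤ (QA : ℝ) + QB := by
      have hA : (1:ℝ) ≤ (QA : ℝ) := by exact_mod_cast hQA
      have hB : (r.den : ℝ) + 1 ≤ (QB : ℝ) := by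
        have : r.den + 1 ≤ QB := hlen ▸ hlenQB
        exact_mod_cast this
      linarith
    linarith

lemma chain_lemma (θ w : ℝ) (h0 : 0 < θ) :
    ∃ k : ℕ, 1 ≤ k ∧ (k : ℝ) ≤ 1 / θ + 1 ∧ ∃ i : ℤ, |(k : ℝ) * θ - w - i| ≤ θ := by
  have hc0 : 0 ≤ Int.fract w := Int.fract_nonneg w
  have hc1 : Int.fract w < 1 := Int.fract_lt_one w
  set c := Int.fract w with hcdef
  set k0 := ⌊c / θ⌋ with hk0
  have hk0nn : 0 ≤ k0 := Int.floor_nonneg.mpr (by positivity)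
  have hfl : (k0 : ℝ) ≤ c / θ := Int.floor_le _
  have hfl2 : c / θ < (k0 : ℝ) + 1 := Int.lt_floor_add_one _
  have hk0θ : (k0 : ℝ) * θ ≤ c := (le_div_iff₀ h0).mp hfl
  have hcθ : c < ((k0 : ℝ) + 1) * θ := (div_lt_iff₀ h0).mp hfl2
  have hcast : ((k0.toNat : ℕ) : ℝ) = (k0 : ℝ) := by
    exact_mod_cast Int.toNat_of_nonneg hk0nn
  refine ⟨k0.toNat + 1, by omega, ?_, -⌊w⌋, ?_⟩
  · have h2 : c / θ ≤ 1 / θ := by gcongr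
    push_cast [hcast]
    linarith
  · have hw : c = w - ⌊w⌋ := rfl
    push_cast [hcast]
    rw [abs_le]
    constructor <;> linarith [hk0θ, hcθ, hw]

lemma dense_orbit {α : ℝ} (h : Irrational α) (ε : ℝ) (hε : 0 < ε) :
    ∃ N : ℕ, 1 ≤ N ∧ ∀ y : ℝ, ∃ m : ℕ, 1 ≤ m ∧ m ≤ N ∧ ∃ n : ℤ, |(m : ℝ) * α - y - n| < ε := by
  obtain ⟨n₀, hn₀⟩ := exists_nat_gt (1 / ε)
  have hn₀pos : 0 < n₀ + 1 := Nat.succ_pos _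
  obtain ⟨p, j, hj0, hjn, hjp⟩ := Real.exists_int_int_abs_mul_sub_le α hn₀pos
  set θ := (j : ℝ) * α - p with hθdef
  have hθne : θ ≠ 0 := by
    intro h0
    apply h
    refine ⟨(p : ℚ) / (j : ℚ), ?_⟩
    have hjne : (j : ℝ) ≠ 0 := by
      have : (0:ℝ) < (j : ℝ) := by exact_mod_cast hj0
      exact this.ne'
    have hpα : (j : ℝ) * α = p := by
      have := sub_eq_zero.mp h0
      linarith [this]
    push_cast
    rw [div_eq_iff hjne]
    linarith [hpα]
  have hεn : 1 < (n₀ : ℝ) * ε := by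
    rw [div_lt_iff₀ hε] at hn₀
    linarith
  have hθlt : |θ| < ε := by
    have h2 := hjp
    push_cast at h2
    have h3 : 1 / ((n₀ : ℝ) + 1 + 1) < ε := by
      rw [div_lt_iff₀ (by positivity)]
      nlinarith
    linarith
  have hθpos : 0 < |θ| := abs_pos.mpr hθne
  set K : ℕ := ⌈1 / |θ|⌉₊ + 1 with hK
  have hKb : 1 / |θ| + 1 ≤ (K : ℝ) := by
    rw [hK]
    push_cast
    have := Nat.le_ceil (1 / |θ|)
    linarith
  have hjtn : 1 ≤ j.toNat := by omega
  refine ⟨j.toNat * K, by simpa using Nat.mul_le_mul hjtn (show 1 ≤ K by omega), ?_⟩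
  intro y
  have key : ∃ k : ℕ, 1 ≤ k ∧ k ≤ K ∧ ∃ i : ℤ, |(k : ℝ) * θ - y - i| ≤ |θ| := by
    rcases lt_or_gt_of_ne hθne with hneg | hpos
    · obtain ⟨k, hk1, hkb, i, hki⟩ := chain_lemma (-θ) (-y) (by linarith)
      refine ⟨k, hk1, ?_, -i, ?_⟩
      · have : (k : ℝ) ≤ 1 / |θ| + 1 := by
          rwa [abs_of_neg hneg]
        exact_mod_cast this.trans hKb
      · have heq : ((k : ℝ) * θ - y - ((-i : ℤ) : ℝ)) = -((k : ℝ) * (-θ) - (-y) - i) := by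
          push_cast
          ring
        rw [heq, abs_neg, abs_of_neg hneg]
        exact hki
    · obtain ⟨k, hk1, hkb, i, hki⟩ := chain_lemma θ y hpos
      refine ⟨k, hk1, ?_, i, ?_⟩
      · have : (k : ℝ) ≤ 1 / |θ| + 1 := by
          rwa [abs_of_pos hpos]
        exact_mod_cast this.trans hKb
      · exact hki.trans (le_abs_self θ)
  obtain ⟨k, hk1, hkK, i, hki⟩ := key
  refine ⟨j.toNat * k, by simpa using Nat.mul_le_mul hjtn hk1, Nat.mul_le_mul_left _ hkK,
    i + k * p, ?_⟩
  have hjcast : ((j.toNat : ℕ) : ℝ) = (j : ℝ) := by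
    exact_mod_cast Int.toNat_of_nonneg hj0.le
  have hexp : ((j.toNat * k : ℕ) : ℝ) * α - y - ((i + k * p : ℤ) : ℝ)
      = (k : ℝ) * θ - y - i := by
    push_cast
    rw [hjcast, hθdef]
    ring
  rw [hexp]
  exact lt_of_le_of_lt hki hθlt

lemma unif (𝒜 : Finset ℕ) (h𝒜 : ∀ x ∈ 𝒜, 1 ≤ x) (ε : ℝ) (hε : 0 < ε) :
    ∃ N : ℕ, 1 ≤ N ∧ ∀ α ∈ Cset 𝒜, ∀ y : ℝ,
      ∃ m : ℕ, 1 ≤ m ∧ m ≤ N ∧ ∃ n : ℤ, |(m : ℝ) * α - y - n| < ε := by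
  have hhalf : 0 < ε / 2 := by linarith
  have hch : ∀ i : Cset 𝒜, ∃ N : ℕ, 1 ≤ N ∧ ∀ y : ℝ,
      ∃ m : ℕ, 1 ≤ m ∧ m ≤ N ∧ ∃ n : ℤ, |(m : ℝ) * (i : ℝ) - y - n| < ε / 2 :=
    fun i => dense_orbit (Cset_irrational h𝒜 i.2) (ε / 2) hhalf
  choose F hF1 hF2 using hch
  have hrad : ∀ i : Cset 𝒜, 0 < ε / (2 * F i) := by
    intro i
    have : (0:ℝ) < (F i : ℝ) := by exact_mod_cast hF1 i
    positivity
  have hcover : Cset 𝒜 ⊆ ⋃ i : Cset 𝒜, Metric.ball (i : ℝ) (ε / (2 * F i)) := by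
    intro α hα
    exact Set.mem_iUnion.mpr ⟨⟨α, hα⟩, Metric.mem_ball_self (hrad ⟨α, hα⟩)⟩
  obtain ⟨t, ht⟩ := (isCompact_Cset 𝒜).elim_finite_subcover
    (fun i : Cset 𝒜 => Metric.ball (i : ℝ) (ε / (2 * F i))) (fun i => Metric.isOpen_ball) hcover
  refine ⟨max 1 (t.sup F), le_max_left _ _, ?_⟩
  intro α hα y
  obtain ⟨i, hit, hiball⟩ := Set.mem_iUnion₂.mp (ht hα)
  obtain ⟨m, hm1, hmF, n, hn⟩ := hF2 i y
  refine ⟨m, hm1, le_trans (hmF.trans (Finset.le_sup hit)) (le_max_right _ _), n, ?_⟩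
  have hdist : |α - (i : ℝ)| < ε / (2 * F i) := by
    rw [Metric.mem_ball, Real.dist_eq] at hiball
    exact hiball
  have hFpos : (0:ℝ) < (F i : ℝ) := by exact_mod_cast hF1 i
  have hmle : (m : ℝ) ≤ (F i : ℝ) := by exact_mod_cast hmF
  have key : |(m : ℝ) * α - y - n| ≤ |(m : ℝ) * (i : ℝ) - y - n| + (m : ℝ) * |α - (i : ℝ)| := by
    have : (m : ℝ) * α - y - n = ((m : ℝ) * (i : ℝ) - y - n) + (m : ℝ) * (α - (i : ℝ)) := by
      ring
    rw [this]
    calc |((m : ℝ) * (i : ℝ) - y - n) + (m : ℝ) * (α - (i : ℝ))|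
        ≤ |(m : ℝ) * (i : ℝ) - y - n| + |(m : ℝ) * (α - (i : ℝ))| := abs_add_le _ _
    _ = |(m : ℝ) * (i : ℝ) - y - n| + (m : ℝ) * |α - (i : ℝ)| := by
        rw [abs_mul, abs_of_nonneg (by positivity : (0:ℝ) ≤ (m:ℝ))]
  have hmd : (m : ℝ) * |α - (i : ℝ)| < ε / 2 := by
    calc (m : ℝ) * |α - (i : ℝ)| ≤ (F i : ℝ) * |α - (i : ℝ)| := by
          apply mul_le_mul_of_nonneg_right hmle (abs_nonneg _)
    _ < (F i : ℝ) * (ε / (2 * F i)) := by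
          apply mul_lt_mul_of_pos_left hdist hFpos
    _ = ε / 2 := by field_simp
  linarith [key, hn, hmd]


/-- Let `𝒜` be a finite set of positive integers and `Q = (q₁,q₂)`,
`Q' = (q₁',q₂')` rational points of `𝕋² = ℝ²/ℤ²`. For every `ε > 0` there is `l* > 0`
such that every segment in `𝕋²` with midpoint `Q`, irrational slope `[a₁,a₂,…]` with all
`aᵢ ∈ 𝒜`, and length `ℓ > l*`, comes within distance `ε` of `Q'`. (The segment is lifted
to `t ↦ Q + t·(1,α)/√(1+α²)`, `t ∈ [−ℓ/2, ℓ/2]`, and the torus distance to `Q'` is the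
Euclidean distance to the integer translates `Q' + (m,n)`.) -/
theorem stmt18 (𝒜 : Finset ℕ) (h𝒜 : ∀ x ∈ 𝒜, 1 ≤ x)
    (q₁ q₂ q₁' q₂' : ℚ) (ε : ℝ) (hε : 0 < ε) :
    ∃ lstar > 0, ∀ (α : ℝ) (a : ℕ → ℕ), (∀ i, a i ∈ 𝒜) → cfLim a α →
      ∀ ℓ : ℝ, lstar < ℓ →
      ∃ t ∈ Set.Icc (-(ℓ / 2)) (ℓ / 2), ∃ m n : ℤ,
        Real.sqrt
          (((q₁ : ℝ) + t / Real.sqrt (1 + α ^ 2) - ((q₁' : ℝ) + m)) ^ 2 +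
           ((q₂ : ℝ) + t * α / Real.sqrt (1 + α ^ 2) - ((q₂' : ℝ) + n)) ^ 2) < ε := by
  obtain ⟨N, hN1, hN⟩ := unif 𝒜 h𝒜 ε hε
  set c₁ : ℝ := (q₁' : ℝ) - (q₁ : ℝ) with hc₁
  refine ⟨2 * Real.sqrt 2 * (|c₁| + N) + 1, by positivity, ?_⟩
  intro α a ha hlim ℓ hℓ
  have hαC : α ∈ Cset 𝒜 := mem_Cset_of_cfLim h𝒜 ha hlim
  have hα01 : α ∈ Set.Icc (0:ℝ) 1 := Cset_subset_Icc 𝒜 hαC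
  obtain ⟨hα0, hα1⟩ := hα01
  set s : ℝ := Real.sqrt (1 + α ^ 2) with hs
  have hspos : 0 < s := Real.sqrt_pos.mpr (by positivity)
  have hs2 : s ≤ Real.sqrt 2 := Real.sqrt_le_sqrt (by nlinarith)
  obtain ⟨M, hM1, hMN, n, hn⟩ := hN α hαC ((q₁ - q₁' : ℝ) * α + (q₂' : ℝ) - q₂)
  set t : ℝ := s * (c₁ + M) with ht
  have hMreal : (M : ℝ) ≤ (N : ℝ) := by exact_mod_cast hMN
  have htabs : |t| ≤ Real.sqrt 2 * (|c₁| + N) := by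
    rw [ht, abs_mul, abs_of_pos hspos]
    have h1 : |c₁ + (M : ℝ)| ≤ |c₁| + N := by
      have h1a : |c₁ + (M : ℝ)| ≤ |c₁| + |(M : ℝ)| := abs_add_le _ _
      have h1b : |(M : ℝ)| = (M : ℝ) := abs_of_nonneg (by positivity)
      rw [h1b] at h1a
      linarith
    exact mul_le_mul hs2 h1 (abs_nonneg _) (Real.sqrt_nonneg 2)
  have htIcc : t ∈ Set.Icc (-(ℓ / 2)) (ℓ / 2) := by
    have hhalf : |t| ≤ ℓ / 2 := by
      have hsq : (0:ℝ) ≤ Real.sqrt 2 := Real.sqrt_nonneg 2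
      have habs : (0:ℝ) ≤ |c₁| + N := by positivity
      nlinarith
    rw [Set.mem_Icc]
    constructor <;> [linarith [neg_abs_le t]; linarith [le_abs_self t]]
  refine ⟨t, htIcc, (M : ℤ), n, ?_⟩
  have hts : t / s = c₁ + (M : ℝ) := by
    rw [div_eq_iff hspos.ne', ht]
    ring
  have hfirst : (q₁ : ℝ) + t / s - ((q₁' : ℝ) + ((M : ℤ) : ℝ)) = 0 := by
    rw [hts, hc₁]
    push_cast
    ring
  have hsecond : (q₂ : ℝ) + t * α / s - ((q₂' : ℝ) + (n : ℝ))
      = (M : ℝ) * α - ((q₁ - q₁' : ℝ) * α + (q₂' : ℝ) - q₂) - n := by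
    have hts2 : t * α / s = (c₁ + (M : ℝ)) * α := by
      rw [div_eq_iff hspos.ne', ht]
      ring
    rw [hts2, hc₁]
    push_cast
    ring
  rw [hfirst, hsecond]
  have : (0:ℝ) ^ 2 + ((M : ℝ) * α - ((q₁ - q₁' : ℝ) * α + (q₂' : ℝ) - q₂) - n) ^ 2
      = ((M : ℝ) * α - ((q₁ - q₁' : ℝ) * α + (q₂' : ℝ) - q₂) - n) ^ 2 := by ring
  rw [this, Real.sqrt_sq_eq_abs]
  exact hn
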